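/- arXiv:2012.10955 — 3 statements merged into one kernel-verified Lean document; each statement's English description precedes it below -/
import Mathlib

section
/- Borel Lemma: Let T be a strictly positive nondecreasing function of class C^1 on (0,∞), let γ > 0 be a number such that T(γ) ≥ e, and let φ be a strictly positive nondecreasing function on [e,∞) such that c_φ := ∫_e^∞ dt/(t·φ(t)) < ∞. Then the inequality T'(r) ≤ T(r)·φ(T(r)) holds for all r ≥ γ outside a set of Lebesgue measure not exceeding c_φ. -/
open MeasureTheory Set

/-- A set of reals containing no strictly increasing triple has at most two elements,
hence is countable. -/
lemma countable_of_no_middle {S : Set ℝ}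
    (h : ∀ a ∈ S, ∀ b ∈ S, ∀ c ∈ S, a < b → b < c → False) : S.Countable := by
  have sorted : ∀ {p q r : ℝ}, p ∈ S → q ∈ S → r ∈ S → p ≠ q → q ≠ r → p ≠ r → False := by
    intro p q r hp hq hr hpq hqr hpr
    rcases lt_trichotomy p q with h1 | h1 | h1
    · rcases lt_trichotomy q r with h2 | h2 | h2
      · exact h p hp q hq r hr h1 h2
      · exact hqr h2
      · rcases lt_trichotomy p r with h3 | h3 | h3
        · exact h p hp r hr q hq h3 h2
        · exact hpr h3
        · exact h r hr p hp q hq h3 h1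
    · exact hpq h1
    · rcases lt_trichotomy q r with h2 | h2 | h2
      · rcases lt_trichotomy p r with h3 | h3 | h3
        · exact h q hq p hp r hr h1 h3
        · exact hpr h3
        · exact h q hq r hr p hp h2 h3
      · exact hqr h2
      · exact h r hr q hq p hp h2 h1
  by_cases hS : S.Subsingleton
  · exact hS.countable
  · rw [Set.not_subsingleton_iff] at hS
    obtain ⟨a, ha, b, hb, hne⟩ := hS
    refine ((Set.countable_singleton b).insert a).mono ?_
    intro x hx
    by_contra hx'
    simp only [Set.mem_insert_iff, Set.mem_singleton_iff, not_or] at hx'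
    exact sorted hx ha hb hx'.1 hne hx'.2

/-- **Borel Lemma.** Let `T` be a strictly positive nondecreasing `C¹` function on `(0,∞)`,
let `γ > 0` be such that `T γ ≥ e`, and let `φ` be strictly positive and nondecreasing on
`[e,∞)` with `c_φ = ∫_e^∞ dt/(t·φ t) < ∞`.  Then `T' r ≤ T r * φ (T r)` holds for all
`r ≥ γ` outside a set of Lebesgue measure at most `c_φ`. -/
theorem borel_lemma (T φ : ℝ → ℝ) (γ : ℝ) (hγ : 0 < γ)
    (hT1 : ContDiffOn ℝ 1 T (Set.Ioi 0))
    (hTpos : ∀ r ∈ Set.Ioi (0:ℝ), 0 < T r)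
    (hTmono : MonotoneOn T (Set.Ioi 0))
    (hTγ : Real.exp 1 ≤ T γ)
    (hφpos : ∀ t ∈ Set.Ici (Real.exp 1), 0 < φ t)
    (hφmono : MonotoneOn φ (Set.Ici (Real.exp 1)))
    (hφint : IntegrableOn (fun t => 1 / (t * φ t)) (Set.Ici (Real.exp 1))) :
    volume {r : ℝ | r ∈ Set.Ici γ ∧ T r * φ (T r) < deriv T r}
      ≤ ENNReal.ofReal (∫ t in Set.Ici (Real.exp 1), 1 / (t * φ t)) := by
  set e := Real.exp 1 with he
  have hepos : 0 < e := Real.exp_pos 1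
  -- basic facts about T on [γ, ∞)
  have hr0 : ∀ r : ℝ, γ ≤ r → (0 : ℝ) < r := fun r hr => lt_of_lt_of_le hγ hr
  have hTre : ∀ r : ℝ, γ ≤ r → e ≤ T r := fun r hr =>
    hTγ.trans (hTmono (mem_Ioi.2 hγ) (mem_Ioi.2 (hr0 r hr)) hr)
  -- extended φ, monotone on all of ℝ
  set φt : ℝ → ℝ := fun x => φ (max x e) with hφt_def
  have hφt_eq : ∀ x : ℝ, e ≤ x → φt x = φ x := fun x hx => by
    simp only [hφt_def, max_eq_left hx]
  have hφt_mono : Monotone φt := fun x y hxy =>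
    hφmono (mem_Ici.2 (le_max_right _ _)) (mem_Ici.2 (le_max_right _ _))
      (max_le_max hxy le_rfl)
  have hφt_pos : ∀ x : ℝ, 0 < φt x := fun x => hφpos _ (mem_Ici.2 (le_max_right _ _))
  -- the integrand
  set g : ℝ → ℝ := fun t => 1 / (t * φt t) with hg_def
  have hg_eq : EqOn (fun t => 1 / (t * φ t)) g (Ici e) := fun t ht => by
    simp only [hg_def, hφt_eq t ht]
  have hgint : IntegrableOn g (Ici e) := hφint.congr_fun hg_eq measurableSet_Ici
  have hg_meas : Measurable g := measurable_const.div (measurable_id.mul hφt_mono.measurable)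
  have hg_pos : ∀ t : ℝ, 0 < t → 0 < g t := fun t ht =>
    one_div_pos.2 (mul_pos ht (hφt_pos t))
  have bInt : ∀ x y : ℝ, e ≤ x → e ≤ y → IntervalIntegrable g volume x y := by
    intro x y hx hy
    apply (hgint.mono_set ?_).intervalIntegrable
    intro t ht
    rcases le_total x y with hxy | hxy
    · rw [Set.uIcc_of_le hxy] at ht
      exact le_trans hx ht.1
    · rw [Set.uIcc_of_ge hxy] at ht
      exact le_trans hy ht.1
  -- the function F
  set F : ℝ → ℝ := fun r => ∫ t in e..(T r), g t with hF_def
  have hFmono : MonotoneOn F (Ici γ) := by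
    intro a ha b hb hab
    have h1 : IntervalIntegrable g volume e (T a) := bInt _ _ le_rfl (hTre a ha)
    have h2 : IntervalIntegrable g volume (T a) (T b) := bInt _ _ (hTre a ha) (hTre b hb)
    have hTab : T a ≤ T b := hTmono (mem_Ioi.2 (hr0 a ha)) (mem_Ioi.2 (hr0 b hb)) hab
    have hadd := intervalIntegral.integral_add_adjacent_intervals h1 h2
    have hnn : 0 ≤ ∫ t in (T a)..(T b), g t :=
      intervalIntegral.integral_nonneg hTab
        (fun u hu => le_of_lt (hg_pos u (lt_of_lt_of_le (lt_of_lt_of_le hepos (hTre a ha)) hu.1)))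
    simp only [hF_def]
    linarith [hadd]
  -- the exceptional set
  set E : Set ℝ := {r : ℝ | r ∈ Set.Ici γ ∧ T r * φ (T r) < deriv T r} with hE_def
  have hE_facts : ∀ r ∈ E, γ ≤ r ∧ 0 < r ∧ e ≤ T r ∧ 0 < T r * φ (T r) := by
    intro r hr
    obtain ⟨hrγ, _⟩ := hr
    have h0 : 0 < r := hr0 r hrγ
    have hTr : e ≤ T r := hTre r hrγ
    exact ⟨hrγ, h0, hTr, mul_pos (lt_of_lt_of_le hepos hTr) (hφpos _ hTr)⟩
  -- measurability of E
  have hE_meas : MeasurableSet E := by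
    have hm : Monotone (fun r : ℝ => T (max r γ) * φt (T (max r γ))) := by
      have hmT : Monotone (fun r : ℝ => T (max r γ)) := fun x y hxy =>
        hTmono (mem_Ioi.2 (lt_of_lt_of_le hγ (le_max_right _ _)))
          (mem_Ioi.2 (lt_of_lt_of_le hγ (le_max_right _ _))) (max_le_max hxy le_rfl)
      have hTnn : ∀ r : ℝ, 0 ≤ T (max r γ) := fun r =>
        le_of_lt (hTpos _ (mem_Ioi.2 (lt_of_lt_of_le hγ (le_max_right _ _))))
      exact hmT.mul (hφt_mono.comp hmT) hTnn (fun r => le_of_lt (hφt_pos _))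
    have hEeq : E = Set.Ici γ ∩ {r : ℝ | T (max r γ) * φt (T (max r γ)) < deriv T r} := by
      ext r
      simp only [hE_def, Set.mem_setOf_eq, Set.mem_inter_iff, Set.mem_Ici]
      constructor
      · rintro ⟨hrγ, hlt⟩
        refine ⟨hrγ, ?_⟩
        rw [max_eq_left hrγ, hφt_eq _ (hTre r hrγ)]
        exact hlt
      · rintro ⟨hrγ, hlt⟩
        refine ⟨hrγ, ?_⟩
        rw [max_eq_left hrγ, hφt_eq _ (hTre r hrγ)] at hlt
        exact hlt
    rw [hEeq]
    exact measurableSet_Ici.inter (measurableSet_lt hm.measurable (measurable_deriv T))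
  -- the discontinuity set
  set D : Set ℝ := {x : ℝ | ¬ ContinuousAt φt x} with hD_def
  have hD_count : D.Countable := hφt_mono.countable_not_continuousAt
  set N : Set ℝ := {r ∈ E | T r ∈ D} with hN_def
  have hN_count : N.Countable := by
    have hsub : N ⊆ ⋃ d ∈ D, {r ∈ E | T r = d} := by
      intro r hr
      exact Set.mem_biUnion hr.2 ⟨hr.1, rfl⟩
    refine (hD_count.biUnion fun d _ => ?_).mono hsub
    apply countable_of_no_middle
    intro a ha b hb c hc hab hbc
    -- T is constant equal to d on [a,c], so deriv T b = 0, contradiction with b ∈ E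
    obtain ⟨haE, haT⟩ := ha
    obtain ⟨hbE, hbT⟩ := hb
    obtain ⟨hcE, hcT⟩ := hc
    have haγ := (hE_facts a haE).1
    have hbγ := (hE_facts b hbE).1
    have hcγ := (hE_facts c hcE).1
    have hconst : ∀ s ∈ Set.Ioo a c, T s = d := by
      intro s hs
      have h1 : T a ≤ T s := hTmono (mem_Ioi.2 (hr0 a haγ))
        (mem_Ioi.2 (lt_trans (hr0 a haγ) hs.1)) (le_of_lt hs.1)
      have h2 : T s ≤ T c := hTmono (mem_Ioi.2 (lt_trans (hr0 a haγ) hs.1))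
        (mem_Ioi.2 (hr0 c hcγ)) (le_of_lt hs.2)
      rw [haT] at h1; rw [hcT] at h2
      linarith
    have hev : T =ᶠ[nhds b] fun _ => d :=
      Filter.eventually_of_mem (Ioo_mem_nhds hab hbc) hconst
    have hderiv0 : deriv T b = 0 := by
      rw [hev.deriv_eq]; exact deriv_const b d
    have := (hE_facts b hbE).2.2.2
    have hlt := hbE.2
    rw [hderiv0] at hlt
    linarith
  have hN_null : volume N = 0 := hN_count.measure_zero volume
  -- the good set
  set E₀ : Set ℝ := E \ N with hE₀_def
  have hE₀_meas : MeasurableSet E₀ := hE_meas.diff hN_count.measurableSet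
  have hE₀_sub : E₀ ⊆ E := Set.diff_subset
  -- derivative of F on E₀
  set d : ℝ → ℝ := fun r => g (T r) * deriv T r with hd_def
  have hFderiv : ∀ r ∈ E₀, HasDerivAt F (d r) r := by
    intro r hr
    have hrE := hE₀_sub hr
    obtain ⟨hrγ, hr0', hTr, _⟩ := hE_facts r hrE
    have hcontφ : ContinuousAt φt (T r) := by
      by_contra hc
      exact hr.2 ⟨hrE, hc⟩
    have hTrpos : 0 < T r := lt_of_lt_of_le hepos hTr
    have hgcont : ContinuousAt g (T r) := by
      apply ContinuousAt.div continuousAt_const (continuousAt_id.mul hcontφ)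
      exact ne_of_gt (mul_pos hTrpos (hφt_pos _))
    have hψ : HasDerivAt (fun u => ∫ t in e..u, g t) (g (T r)) (T r) :=
      intervalIntegral.integral_hasDerivAt_right (bInt _ _ le_rfl hTr)
        hg_meas.stronglyMeasurable.stronglyMeasurableAtFilter hgcont
    have hT' : HasDerivAt T (deriv T r) r :=
      ((hT1.differentiableOn one_ne_zero).differentiableAt
        (Ioi_mem_nhds hr0')).hasDerivAt
    exact hψ.comp r hT'
  have hd_gt : ∀ r ∈ E₀, 1 < d r := by
    intro r hr
    have hrE := hE₀_sub hr
    obtain ⟨hrγ, _, hTr, hpos⟩ := hE_facts r hrE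
    have hTrpos : 0 < T r := lt_of_lt_of_le hepos hTr
    have heq : g (T r) = 1 / (T r * φ (T r)) := by
      simp only [hg_def, hφt_eq _ hTr]
    rw [hd_def]
    simp only [heq, one_div_mul_eq_div]
    rw [lt_div_iff₀ hpos]
    simpa using hrE.2
  -- injectivity of F on E₀
  have hinj : Set.InjOn F E₀ := by
    have key : ∀ r₁ ∈ E₀, ∀ r₂ ∈ E₀, r₁ < r₂ → F r₁ ≠ F r₂ := by
      intro r₁ h₁ r₂ h₂ hlt heq
      have hγ₁ := (hE_facts r₁ (hE₀_sub h₁)).1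
      have hγ₂ := (hE_facts r₂ (hE₀_sub h₂)).1
      have hcst : ∀ s ∈ Set.Icc r₁ r₂, F s = F r₁ := by
        intro s hs
        have hsγ : γ ≤ s := le_trans hγ₁ hs.1
        have h1 : F r₁ ≤ F s := hFmono hγ₁ hsγ hs.1
        have h2 : F s ≤ F r₂ := hFmono hsγ hγ₂ hs.2
        rw [← heq] at h2
        linarith
      have hc : HasDerivWithinAt F 0 (Set.Icc r₁ r₂) r₁ :=
        (hasDerivWithinAt_const r₁ (Set.Icc r₁ r₂) (F r₁)).congr hcst
          (hcst r₁ ⟨le_rfl, le_of_lt hlt⟩)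
      have hd : HasDerivWithinAt F (d r₁) (Set.Icc r₁ r₂) r₁ :=
        (hFderiv r₁ h₁).hasDerivWithinAt
      have hu : UniqueDiffWithinAt ℝ (Set.Icc r₁ r₂) r₁ :=
        (uniqueDiffOn_Icc hlt) r₁ ⟨le_rfl, le_of_lt hlt⟩
      have e1 := hd.derivWithin hu
      have e2 := hc.derivWithin hu
      have := hd_gt r₁ h₁
      rw [e1] at e2
      linarith
    intro a ha b hb heq
    by_contra hne
    rcases Ne.lt_or_gt hne with h | h
    · exact key a ha b hb h heq
    · exact key b hb a ha h heq.symm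
  -- image of F is contained in [0, c]
  set c : ℝ := ∫ t in Set.Ici e, 1 / (t * φ t) with hc_def
  have hc_eq : c = ∫ t in Set.Ici e, g t :=
    setIntegral_congr_fun measurableSet_Ici hg_eq
  have himg : F '' E₀ ⊆ Set.Icc 0 c := by
    rintro _ ⟨r, hr, rfl⟩
    obtain ⟨hrγ, _, hTr, _⟩ := hE_facts r (hE₀_sub hr)
    constructor
    · exact intervalIntegral.integral_nonneg hTr
        (fun u hu => le_of_lt (hg_pos u (lt_of_lt_of_le hepos hu.1)))
    · rw [hF_def]
      simp only
      rw [intervalIntegral.integral_of_le hTr, hc_eq]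
      apply setIntegral_mono_set hgint
      · exact MeasureTheory.ae_restrict_of_forall_mem measurableSet_Ici
          (fun t ht => le_of_lt (hg_pos t (lt_of_lt_of_le hepos ht)))
      · exact HasSubset.Subset.eventuallyLE (fun t ht => le_of_lt ht.1)
  -- main estimate via the Jacobian theorem
  have main : volume E₀ ≤ ENNReal.ofReal c := by
    calc volume E₀ = ∫⁻ _ in E₀, 1 := (setLIntegral_one E₀).symm
      _ ≤ ∫⁻ x in E₀, ENNReal.ofReal
            |(((1 : ℝ →L[ℝ] ℝ).smulRight (d x)).det)| := by
          apply lintegral_mono_ae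
          refine MeasureTheory.ae_restrict_of_forall_mem hE₀_meas (fun x hx => ?_)
          rw [ContinuousLinearMap.smulRight_one_eq_toSpanSingleton, ContinuousLinearMap.det_toSpanSingleton]
          exact ENNReal.one_le_ofReal.2 (le_trans (le_of_lt (hd_gt x hx)) (le_abs_self _))
      _ ≤ volume (F '' E₀) := by
          apply lintegral_abs_det_fderiv_le_addHaar_image volume hE₀_meas
            (fun x hx => ((hFderiv x hx).hasDerivWithinAt).hasFDerivWithinAt) hinj
      _ ≤ volume (Set.Icc 0 c) := measure_mono himg
      _ ≤ ENNReal.ofReal c := by rw [Real.volume_Icc]; simp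
  -- conclude
  have hsub : E ⊆ E₀ ∪ N := fun r hr => by
    by_cases h : T r ∈ D
    · exact Or.inr ⟨hr, h⟩
    · exact Or.inl ⟨hr, fun hN => h hN.2⟩
  calc volume E ≤ volume (E₀ ∪ N) := measure_mono hsub
    _ ≤ volume E₀ + volume N := measure_union_le _ _
    _ = volume E₀ := by rw [hN_null, add_zero]
    _ ≤ ENNReal.ofReal c := main
end

section
/- Double Borel estimate (core of the Calculus Lemma): Let m ≥ 1 be an integer, δ > 0, and let G : (0,∞) → (0,∞) be a nondecreasing continuous function. Let Γ : (0,∞) → ℝ be a nondecreasing function of class C^1 such that the function S(r) := Γ'(r)·G(r)^{2m-1} is strictly positive, nondecreasing and of class C^1, and suppose there exists γ > 0 with Γ(γ) ≥ e and S(γ) ≥ e. Then the inequality d/dr( Γ'(r)·G(r)^{2m-1} ) ≤ G(r)^{2m-1} · { log Γ(r) · log( G(r)^{2m-1} · Γ(r) · (log Γ(r))^{1+δ} ) }^{1+δ} · Γ(r) holds for all r ≥ γ outside a set of finite Lebesgue measure. -/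
open MeasureTheory Set

lemma deriv_nonneg_of_monotoneOn {f : ℝ → ℝ} {d x : ℝ} (hx : 0 < x)
    (hf : MonotoneOn f (Set.Ioi 0)) (hd : HasDerivAt f d x) : 0 ≤ d := by
  have h := hasDerivAt_iff_tendsto_slope.1 hd
  have h2 : Filter.Tendsto (slope f x) (nhdsWithin x (Set.Ioi x)) (nhds d) :=
    h.mono_left (nhdsWithin_mono _ (fun y hy => ne_of_gt hy))
  refine ge_of_tendsto h2 ?_
  filter_upwards [self_mem_nhdsWithin] with y hy
  have hxy : x < y := hy
  have : f x ≤ f y := hf hx (lt_trans hx hxy) hxy.le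
  simp only [slope_def_field, div_nonneg (sub_nonneg.2 this) (sub_nonneg.2 hxy.le)]

lemma borel_lemma_s2 (δ : ℝ) (hδ : 0 < δ) (f : ℝ → ℝ) (γ : ℝ) (hγ : 0 < γ)
    (hf1 : ContDiffOn ℝ 1 f (Set.Ioi 0)) (hmono : MonotoneOn f (Set.Ioi 0))
    (hfγ : Real.exp 1 ≤ f γ) :
    volume {r : ℝ | r ∈ Set.Ici γ ∧ f r * Real.log (f r) ^ (1 + δ) < deriv f r} < ⊤ := by
  set E := {r : ℝ | r ∈ Set.Ici γ ∧ f r * Real.log (f r) ^ (1 + δ) < deriv f r} with hE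
  -- basic facts
  have hIci : Set.Ici γ ⊆ Set.Ioi (0:ℝ) := fun r hr => lt_of_lt_of_le hγ hr
  have hfe : ∀ r ∈ Set.Ici γ, Real.exp 1 ≤ f r := fun r hr =>
    le_trans hfγ (hmono (hIci (self_mem_Ici)) (hIci hr) hr)
  have hfpos : ∀ r ∈ Set.Ici γ, 0 < f r := fun r hr =>
    lt_of_lt_of_le (Real.exp_pos 1) (hfe r hr)
  have hlog1 : ∀ r ∈ Set.Ici γ, 1 ≤ Real.log (f r) := by
    intro r hr
    have := Real.log_le_log (Real.exp_pos 1) (hfe r hr)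
    rwa [Real.log_exp] at this
  have hlogpos : ∀ r ∈ Set.Ici γ, 0 < Real.log (f r) := fun r hr =>
    lt_of_lt_of_le one_pos (hlog1 r hr)
  have hdiff : ∀ r ∈ Set.Ioi (0:ℝ), HasDerivAt f (deriv f r) r := by
    intro r hr
    exact ((hf1.differentiableOn one_ne_zero).differentiableAt
      (isOpen_Ioi.mem_nhds hr)).hasDerivAt
  have hderivcont : ContinuousOn (deriv f) (Set.Ioi 0) :=
    hf1.continuousOn_deriv_of_isOpen isOpen_Ioi le_rfl
  -- the auxiliary function H and its derivative Hd
  set Hd : ℝ → ℝ := fun r => deriv f r / (f r * Real.log (f r) ^ (1 + δ)) with hHd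
  set H : ℝ → ℝ := fun r => -δ⁻¹ * Real.log (f r) ^ (-δ) with hH
  have hden : ∀ r ∈ Set.Ici γ, 0 < f r * Real.log (f r) ^ (1 + δ) := by
    intro r hr
    exact mul_pos (hfpos r hr) (Real.rpow_pos_of_pos (hlogpos r hr) _)
  have hHderiv : ∀ r ∈ Set.Ici γ, HasDerivAt H (Hd r) r := by
    intro r hr
    have h1 : HasDerivAt (fun x => Real.log (f x)) (deriv f r / f r) r :=
      (hdiff r (hIci hr)).log (ne_of_gt (hfpos r hr))
    have h2 : HasDerivAt (fun x => Real.log (f x) ^ (-δ))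
        (deriv f r / f r * (-δ) * Real.log (f r) ^ (-δ - 1)) r :=
      h1.rpow_const (Or.inl (ne_of_gt (hlogpos r hr)))
    have h3 := h2.const_mul (-δ⁻¹)
    refine h3.congr_deriv ?_
    symm
    have hne : Real.log (f r) ≠ 0 := ne_of_gt (hlogpos r hr)
    rw [hHd]
    have : Real.log (f r) ^ (-δ - 1) = (Real.log (f r) ^ (1 + δ))⁻¹ := by
      rw [← Real.rpow_neg (hlogpos r hr).le]
      ring_nf
    rw [this]
    field_simp
  have hHdnn : ∀ r ∈ Set.Ici γ, 0 ≤ Hd r := by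
    intro r hr
    exact div_nonneg (deriv_nonneg_of_monotoneOn (hIci hr) hmono (hdiff r (hIci hr)))
      (hden r hr).le
  have hE1 : ∀ r ∈ E, 1 < Hd r := by
    intro r hr
    rw [hHd]
    rw [lt_div_iff₀ (hden r hr.1)]
    simpa using hr.2
  -- bound on each compact piece
  have key : ∀ b : ℝ, γ ≤ b → volume (E ∩ Set.Icc γ b) ≤ ENNReal.ofReal δ⁻¹ := by
    intro b hb
    have hIcc : Set.Icc γ b ⊆ Set.Ici γ := Set.Icc_subset_Ici_self
    have hfc : ContinuousOn f (Set.Icc γ b) :=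
      (hf1.continuousOn).mono (fun x hx => hIci (hIcc hx))
    have HdCont : ContinuousOn Hd (Set.Icc γ b) := by
      apply ContinuousOn.div
      · exact hderivcont.mono (fun x hx => hIci (hIcc hx))
      · exact hfc.mul (((hfc.log (fun x hx => ne_of_gt (hfpos x (hIcc hx)))).rpow_const
          (fun x hx => Or.inr (by positivity))))
      · exact fun x hx => ne_of_gt (hden x (hIcc hx))
    have hint : IntervalIntegrable Hd volume γ b := by
      apply ContinuousOn.intervalIntegrable
      rwa [Set.uIcc_of_le hb]
    have hftc : ∫ x in γ..b, Hd x = H b - H γ := by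
      apply intervalIntegral.integral_eq_sub_of_hasDerivAt
      · intro x hx
        rw [Set.uIcc_of_le hb] at hx
        exact hHderiv x (hIcc hx)
      · exact hint
    have hHbd : H b - H γ ≤ δ⁻¹ := by
      have h1 : H b ≤ 0 := by
        rw [hH]
        simp only [neg_mul, neg_nonpos]
        exact mul_nonneg (inv_pos.2 hδ).le (Real.rpow_nonneg (hlogpos b hb).le _)
      have h2 : -δ⁻¹ ≤ H γ := by
        rw [hH]
        have : Real.log (f γ) ^ (-δ) ≤ 1 :=
          Real.rpow_le_one_of_one_le_of_nonpos (hlog1 γ self_mem_Ici) (by linarith)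
        nlinarith [inv_pos.2 hδ]
      linarith
    calc volume (E ∩ Set.Icc γ b)
        ≤ (volume.restrict (Set.Icc γ b)) (E ∩ Set.Icc γ b) := by
          have := Measure.le_restrict_apply (μ := volume) (Set.Icc γ b) (E ∩ Set.Icc γ b)
          rwa [Set.inter_assoc, Set.inter_self] at this
      _ ≤ ∫⁻ x, ENNReal.ofReal (Hd x) ∂(volume.restrict (Set.Icc γ b)) := by
          apply meas_le_lintegral₀
          · exact (HdCont.aemeasurable measurableSet_Icc).ennreal_ofReal
          · intro x hx
            have := hE1 x hx.1
            simpa using ENNReal.one_le_ofReal.2 this.le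
      _ = ∫⁻ x, ENNReal.ofReal (Hd x) ∂(volume.restrict (Set.Ioc γ b)) := by
          rw [Measure.restrict_congr_set Ioc_ae_eq_Icc]
      _ = ENNReal.ofReal (∫ x in Set.Ioc γ b, Hd x) := by
          rw [← ofReal_integral_eq_lintegral_ofReal]
          · exact hint.1
          · exact (ae_restrict_iff' measurableSet_Ioc).2
              (Filter.Eventually.of_forall (fun x hx => hHdnn x (le_of_lt hx.1)))
      _ = ENNReal.ofReal (∫ x in γ..b, Hd x) := by
          rw [intervalIntegral.integral_of_le hb]
      _ ≤ ENNReal.ofReal δ⁻¹ := by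
          rw [hftc]
          exact ENNReal.ofReal_le_ofReal hHbd
  -- union over compact pieces
  have hcover : E = ⋃ n : ℕ, E ∩ Set.Icc γ (γ + n) := by
    ext x
    simp only [Set.mem_iUnion, Set.mem_inter_iff]
    constructor
    · intro hx
      obtain ⟨n, hn⟩ := exists_nat_ge (x - γ)
      exact ⟨n, hx, ⟨hx.1, by linarith⟩⟩
    · rintro ⟨n, hx, -⟩
      exact hx
  have hdir : Directed (· ⊆ ·) (fun n : ℕ => E ∩ Set.Icc γ (γ + n)) := by
    apply Monotone.directed_le
    intro i j hij
    exact Set.inter_subset_inter_right _ (Set.Icc_subset_Icc_right (by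
      have : (i:ℝ) ≤ j := Nat.cast_le.2 hij
      linarith))
  have hval := hdir.measure_iUnion (μ := volume)
  rw [← hcover] at hval
  rw [hval]
  refine lt_of_le_of_lt (iSup_le (fun n => key (γ + n) ?_)) ENNReal.ofReal_lt_top
  have : (0:ℝ) ≤ n := Nat.cast_nonneg n
  linarith


/-- **Double Borel estimate** (core of the Calculus Lemma).  Let `m ≥ 1`, `δ > 0`, and let
`G : (0,∞) → (0,∞)` be nondecreasing and continuous.  Let `Γ` be nondecreasing, strictly
positive and `C¹` such that `S r = Γ' r * G r ^ (2m-1)` is strictly positive, nondecreasing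
and `C¹`, with `Γ γ ≥ e`, `S γ ≥ e` for some `γ > 0`.  Then
`(d/dr)(Γ' r · G r ^ (2m-1)) ≤ G r ^ (2m-1) · {log Γ r · log(G r ^ (2m-1) · Γ r ·
(log Γ r)^(1+δ))}^(1+δ) · Γ r` holds for all `r ≥ γ` outside a set of finite Lebesgue
measure. -/
theorem double_borel_estimate (m : ℕ) (hm : 1 ≤ m) (δ : ℝ) (hδ : 0 < δ)
    (G Γ : ℝ → ℝ) (γ : ℝ) (hγ : 0 < γ)
    (hGcont : ContinuousOn G (Set.Ioi 0))
    (hGmono : MonotoneOn G (Set.Ioi 0))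
    (hGpos : ∀ r ∈ Set.Ioi (0:ℝ), 0 < G r)
    (hΓ1 : ContDiffOn ℝ 1 Γ (Set.Ioi 0))
    (hΓmono : MonotoneOn Γ (Set.Ioi 0))
    (hΓpos : ∀ r ∈ Set.Ioi (0:ℝ), 0 < Γ r)
    (S : ℝ → ℝ) (hSdef : S = fun r => deriv Γ r * G r ^ (2 * m - 1))
    (hSpos : ∀ r ∈ Set.Ioi (0:ℝ), 0 < S r)
    (hSmono : MonotoneOn S (Set.Ioi 0))
    (hS1 : ContDiffOn ℝ 1 S (Set.Ioi 0))
    (hΓγ : Real.exp 1 ≤ Γ γ) (hSγ : Real.exp 1 ≤ S γ) :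
    volume {r : ℝ | r ∈ Set.Ici γ ∧
        G r ^ (2 * m - 1) *
            (Real.log (Γ r) *
              Real.log (G r ^ (2 * m - 1) * Γ r * Real.log (Γ r) ^ (1 + δ))) ^ (1 + δ) *
          Γ r
        < deriv S r} < ⊤ := by
  set k := 2 * m - 1 with hk
  set E1 := {r : ℝ | r ∈ Set.Ici γ ∧ S r * Real.log (S r) ^ (1 + δ) < deriv S r} with hE1
  set E2 := {r : ℝ | r ∈ Set.Ici γ ∧ Γ r * Real.log (Γ r) ^ (1 + δ) < deriv Γ r} with hE2
  have h1 : volume E1 < ⊤ := borel_lemma_s2 δ hδ S γ hγ hS1 hSmono hSγ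
  have h2 : volume E2 < ⊤ := borel_lemma_s2 δ hδ Γ γ hγ hΓ1 hΓmono hΓγ
  have hsub : {r : ℝ | r ∈ Set.Ici γ ∧
        G r ^ k * (Real.log (Γ r) *
              Real.log (G r ^ k * Γ r * Real.log (Γ r) ^ (1 + δ))) ^ (1 + δ) * Γ r
        < deriv S r} ⊆ E1 ∪ E2 := by
    intro r hr
    obtain ⟨hrγ, hlt⟩ := hr
    by_contra hc
    rw [Set.mem_union] at hc
    push_neg at hc
    have hnE1 : ¬ (S r * Real.log (S r) ^ (1 + δ) < deriv S r) := fun h => hc.1 ⟨hrγ, h⟩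
    have hnE2 : ¬ (Γ r * Real.log (Γ r) ^ (1 + δ) < deriv Γ r) := fun h => hc.2 ⟨hrγ, h⟩
    push_neg at hnE1 hnE2
    have hr0 : r ∈ Set.Ioi (0:ℝ) := lt_of_lt_of_le hγ hrγ
    have hγ0 : γ ∈ Set.Ioi (0:ℝ) := hγ
    have hΓe : Real.exp 1 ≤ Γ r := le_trans hΓγ (hΓmono hγ0 hr0 hrγ)
    have hSe : Real.exp 1 ≤ S r := le_trans hSγ (hSmono hγ0 hr0 hrγ)
    have hΓr : 0 < Γ r := lt_of_lt_of_le (Real.exp_pos 1) hΓe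
    have hSr : 0 < S r := lt_of_lt_of_le (Real.exp_pos 1) hSe
    have hlogΓ : 1 ≤ Real.log (Γ r) := by
      have := Real.log_le_log (Real.exp_pos 1) hΓe; rwa [Real.log_exp] at this
    have hlogS : 1 ≤ Real.log (S r) := by
      have := Real.log_le_log (Real.exp_pos 1) hSe; rwa [Real.log_exp] at this
    have hGr : 0 < G r ^ k := pow_pos (hGpos r hr0) k
    set A := G r ^ k * Γ r * Real.log (Γ r) ^ (1 + δ) with hA
    have hSA : S r ≤ A := by
      have : deriv Γ r * G r ^ k ≤ Γ r * Real.log (Γ r) ^ (1 + δ) * G r ^ k :=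
        mul_le_mul_of_nonneg_right hnE2 hGr.le
      rw [hSdef]
      calc deriv Γ r * G r ^ k ≤ Γ r * Real.log (Γ r) ^ (1 + δ) * G r ^ k := this
        _ = A := by rw [hA]; ring
    have hApos : 0 < A := lt_of_lt_of_le hSr hSA
    have hlogA : Real.log (S r) ≤ Real.log A := Real.log_le_log hSr hSA
    have hlogA1 : 1 ≤ Real.log A := le_trans hlogS hlogA
    have hchain : deriv S r ≤ A * Real.log A ^ (1 + δ) := by
      refine le_trans hnE1 ?_
      refine mul_le_mul hSA ?_ (Real.rpow_nonneg (by linarith) _) hApos.le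
      exact Real.rpow_le_rpow (by linarith) hlogA (by linarith)
    have hrw : G r ^ k * (Real.log (Γ r) * Real.log A) ^ (1 + δ) * Γ r
        = A * Real.log A ^ (1 + δ) := by
      rw [Real.mul_rpow (by linarith) (by linarith), hA]
      ring
    rw [hrw] at hlt
    exact absurd (lt_of_lt_of_le hlt hchain) (lt_irrefl _)
  calc volume {r : ℝ | r ∈ Set.Ici γ ∧
        G r ^ k * (Real.log (Γ r) *
              Real.log (G r ^ k * Γ r * Real.log (Γ r) ^ (1 + δ))) ^ (1 + δ) * Γ r
        < deriv S r} ≤ volume (E1 ∪ E2) := measure_mono hsub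
    _ ≤ volume E1 + volume E2 := measure_union_le _ _
    _ < ⊤ := ENNReal.add_lt_top.2 ⟨h1, h2⟩
end

section
/- Let κ : [0,∞) → ℝ be a continuous, nonincreasing function with κ(t) ≤ 0 for all t ≥ 0, and let G : [0,∞) → ℝ be a C^2 solution of the ODE G''(t) + κ(t)·G(t) = 0 with G(0) = 0 and G'(0) = 1. Then G(r) ≤ r·exp( r·√(−κ(r)) ) for all r ≥ 0. -/
open Set

/-- Let `κ : [0,∞) → ℝ` be continuous, nonincreasing and nonpositive, and let `G` be a
`C²` solution of `G'' + κ·G = 0` on `[0,∞)` with `G 0 = 0` and `G' 0 = 1`.  Then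
`G r ≤ r · exp(r · √(−κ r))` for all `r ≥ 0`. -/
theorem ode_comparison_upper (κ G : ℝ → ℝ)
    (hκc : ContinuousOn κ (Set.Ici 0))
    (hκanti : AntitoneOn κ (Set.Ici 0))
    (hκ : ∀ t ∈ Set.Ici (0:ℝ), κ t ≤ 0)
    (hG : ContDiffOn ℝ 2 G (Set.Ici 0))
    (hode : ∀ t ∈ Set.Ici (0:ℝ),
      derivWithin (derivWithin G (Set.Ici 0)) (Set.Ici 0) t = -(κ t) * G t)
    (hG0 : G 0 = 0)
    (hG'0 : derivWithin G (Set.Ici 0) 0 = 1) :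
    ∀ r ∈ Set.Ici (0:ℝ), G r ≤ r * Real.exp (r * Real.sqrt (-κ r)) := by
  intro r hr
  have hr0 : (0:ℝ) ≤ r := hr
  set K := Real.sqrt (-κ r) with hKdef
  have hK0 : 0 ≤ K := Real.sqrt_nonneg _
  have hKsq : K ^ 2 = -κ r := Real.sq_sqrt (by linarith [hκ r hr])
  set g := derivWithin G (Set.Ici 0) with hgdef
  have hGdiff : DifferentiableOn ℝ G (Set.Ici 0) := hG.differentiableOn two_ne_zero
  have hgC1 : ContDiffOn ℝ 1 g (Set.Ici 0) :=
    hG.derivWithin (uniqueDiffOn_Ici 0) le_rfl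
  have hgdiff : DifferentiableOn ℝ g (Set.Ici 0) := hgC1.differentiableOn one_ne_zero
  have hgcont : ContinuousOn g (Set.Ici 0) := hgdiff.continuousOn
  set f : ℝ → ℝ × ℝ := fun t => (K * G t, g t) with hfdef
  set f' : ℝ → ℝ × ℝ := fun t => (K * g t, -κ t * G t) with hf'def
  -- derivative of f
  have hf' : ∀ x ∈ Set.Ico (0:ℝ) r, HasDerivWithinAt f (f' x) (Set.Ici x) x := by
    intro x hx
    have hx0 : x ∈ Set.Ici (0:ℝ) := hx.1
    have h1 : HasDerivWithinAt G (g x) (Set.Ici 0) x := (hGdiff x hx0).hasDerivWithinAt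
    have h2 : HasDerivWithinAt g (-κ x * G x) (Set.Ici 0) x := by
      have h := (hgdiff x hx0).hasDerivWithinAt
      rwa [show derivWithin g (Set.Ici 0) x = -κ x * G x from hode x hx0] at h
    exact (HasDerivWithinAt.prodMk (h1.const_mul K) h2).mono (Set.Ici_subset_Ici.2 hx.1)
  have hfc : ContinuousOn f (Set.Icc 0 r) :=
    ((ContinuousOn.prodMk (hGdiff.continuousOn.const_smul K) hgcont).mono (Set.Icc_subset_Ici_self))
  have hδ : ‖f 0‖ ≤ 1 := by
    simp [hfdef, Prod.norm_def, hG0, hG'0, ← hgdef, abs_of_nonneg hK0]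
  have hbound : ∀ x ∈ Set.Ico (0:ℝ) r, ‖f' x‖ ≤ K * ‖f x‖ + 0 := by
    intro x hx
    have hx0 : x ∈ Set.Ici (0:ℝ) := hx.1
    have hκx : -κ x ≤ -κ r := by
      have := hκanti hx0 hr hx.2.le; linarith
    have hκx0 : 0 ≤ -κ x := by linarith [hκ x hx0]
    rw [add_zero, Prod.norm_def, Prod.norm_def]
    simp only [Real.norm_eq_abs]
    rw [max_le_iff]
    constructor
    · calc |K * g x| = K * |g x| := by rw [abs_mul, abs_of_nonneg hK0]
        _ ≤ K * max |K * G x| |g x| := by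
            exact mul_le_mul_of_nonneg_left (le_max_right _ _) hK0
    · calc |(-κ x) * G x| = (-κ x) * |G x| := by rw [abs_mul, abs_of_nonneg hκx0]
        _ ≤ (-κ r) * |G x| := mul_le_mul_of_nonneg_right hκx (abs_nonneg _)
        _ = K * |K * G x| := by
            rw [abs_mul, abs_of_nonneg hK0, ← mul_assoc, ← sq, hKsq]
        _ ≤ K * max |K * G x| |g x| :=
            mul_le_mul_of_nonneg_left (le_max_left _ _) hK0
  have key : ∀ x ∈ Set.Icc (0:ℝ) r, ‖f x‖ ≤ Real.exp (K * x) := by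
    intro x hx
    have := norm_le_gronwallBound_of_norm_deriv_right_le hfc hf' hδ hbound x hx
    rwa [gronwallBound_ε0, sub_zero, one_mul] at this
  -- bound on g
  have hgbound : ∀ x ∈ Set.Icc (0:ℝ) r, |g x| ≤ Real.exp (K * r) := by
    intro x hx
    have h1 : |g x| ≤ ‖f x‖ := by
      rw [Prod.norm_def]; simp only [Real.norm_eq_abs]; exact le_max_right |K * G x| |g x|
    have h2 := key x hx
    have h3 : Real.exp (K * x) ≤ Real.exp (K * r) :=
      Real.exp_le_exp.2 (mul_le_mul_of_nonneg_left hx.2 hK0)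
    linarith
  -- mean value
  have hGd : ∀ x ∈ Set.Icc (0:ℝ) r, HasDerivWithinAt G (g x) (Set.Icc 0 r) x := fun x hx =>
    ((hGdiff x hx.1).hasDerivWithinAt).mono Set.Icc_subset_Ici_self
  have hmv := (convex_Icc (0:ℝ) r).norm_image_sub_le_of_norm_hasDerivWithin_le hGd
    (fun x hx => by simpa using hgbound x hx)
    (Set.left_mem_Icc.2 hr0) (Set.right_mem_Icc.2 hr0)
  rw [hG0, sub_zero, sub_zero, Real.norm_eq_abs, Real.norm_eq_abs, abs_of_nonneg hr0] at hmv
  calc G r ≤ |G r| := le_abs_self _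
    _ ≤ Real.exp (K * r) * r := hmv
    _ = r * Real.exp (r * K) := by ring_nf
end
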